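/- The function f₂(γ) = ((γ+δ)/γ)·(1 − μ/(η + √(η² + 2σ²(δ+γ)))) is decreasing on (0, γ₁), satisfies lim_{γ↓0} f₂(γ) = +∞, and lim_{γ↑γ₁} f₂(γ) = 1, where γ₁ = (δ/μ)·(2δσ²/μ + 2η − μ). -/

import Mathlib

open Real Filter Set Topology

/-- f₂(γ) = ((γ+δ)/γ)(1 − μ/(η + √(η² + 2σ²(δ+γ)))). -/
noncomputable def f2 (σ η δ μ : ℝ) (γ : ℝ) : ℝ :=
  ((γ + δ) / γ) * (1 - μ / (η + Real.sqrt (η ^ 2 + 2 * σ ^ 2 * (δ + γ))))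

lemma f2_hasDerivAt (σ η δ μ : ℝ) (hσ : 0 < σ) (hδ : 0 < δ) (hη : 0 < η) {x : ℝ} (hx : 0 < x) :
    HasDerivAt (f2 σ η δ μ)
      ((x * (x + δ) * μ * σ ^ 2
          - δ * Real.sqrt (η ^ 2 + 2 * σ ^ 2 * (δ + x)) * (η + Real.sqrt (η ^ 2 + 2 * σ ^ 2 * (δ + x)))
            * (η + Real.sqrt (η ^ 2 + 2 * σ ^ 2 * (δ + x)) - μ))
        / (x ^ 2 * Real.sqrt (η ^ 2 + 2 * σ ^ 2 * (δ + x)) * (η + Real.sqrt (η ^ 2 + 2 * σ ^ 2 * (δ + x))) ^ 2)) x := by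
  have hq : 0 < η ^ 2 + 2 * σ ^ 2 * (δ + x) := by
    have : 0 < δ + x := by linarith
    positivity
  set s := Real.sqrt (η ^ 2 + 2 * σ ^ 2 * (δ + x)) with hsdef
  have hs : 0 < s := Real.sqrt_pos.mpr hq
  have hden : 0 < η + s := by linarith
  have h1 : HasDerivAt (fun y : ℝ => η ^ 2 + 2 * σ ^ 2 * (δ + y)) (2 * σ ^ 2) x := by
    simpa using (((hasDerivAt_id x).const_add δ).const_mul (2 * σ ^ 2)).const_add (η ^ 2)
  have h2 : HasDerivAt (fun y : ℝ => Real.sqrt (η ^ 2 + 2 * σ ^ 2 * (δ + y)))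
      (1 / (2 * s) * (2 * σ ^ 2)) x := by
    have := (Real.hasDerivAt_sqrt hq.ne').comp x h1
    simpa [hsdef, Function.comp_def] using this
  have h3 : HasDerivAt (fun y : ℝ => η + Real.sqrt (η ^ 2 + 2 * σ ^ 2 * (δ + y)))
      (1 / (2 * s) * (2 * σ ^ 2)) x := h2.const_add η
  have h4 := (hasDerivAt_const x μ).div h3 (ne_of_gt hden)
  have h5 := h4.const_sub 1
  have h6 := ((hasDerivAt_id x).add_const δ).div (hasDerivAt_id x) (ne_of_gt hx)
  have h7 := h6.mul h5
  have heq : (f2 σ η δ μ) = fun y : ℝ =>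
      ((y + δ) / y) * (1 - μ / (η + Real.sqrt (η ^ 2 + 2 * σ ^ 2 * (δ + y)))) := rfl
  rw [heq]
  refine h7.congr_deriv ?_
  simp only [id, Pi.div_apply]
  field_simp
  ring

lemma core_ineq (σ η δ μ x : ℝ) (hσ : 0 < σ) (hδ : 0 < δ) (hη : 0 < η)
    (hημ : η < μ) (hμ2 : μ < 2 * η) (hx : 0 < x)
    (hxlt : x < δ / μ * (2 * δ * σ ^ 2 / μ + 2 * η - μ)) :
    x * (x + δ) * μ * σ ^ 2 ≤
      δ * Real.sqrt (η ^ 2 + 2 * σ ^ 2 * (δ + x)) * (η + Real.sqrt (η ^ 2 + 2 * σ ^ 2 * (δ + x)))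
        * (η + Real.sqrt (η ^ 2 + 2 * σ ^ 2 * (δ + x)) - μ) := by
  have hμ : 0 < μ := hη.trans hημ
  have hdx : 0 < δ + x := by linarith
  have hq : 0 < η ^ 2 + 2 * σ ^ 2 * (δ + x) := by positivity
  set s := Real.sqrt (η ^ 2 + 2 * σ ^ 2 * (δ + x)) with hsdef
  have hs : 0 < s := Real.sqrt_pos.mpr hq
  have hs2 : s ^ 2 = η ^ 2 + 2 * σ ^ 2 * (δ + x) := Real.sq_sqrt hq.le
  have hηs : η < s := by
    rw [hsdef]
    refine (Real.lt_sqrt hη.le).mpr ?_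
    have : 0 < 2 * σ ^ 2 * (δ + x) := by positivity
    linarith
  -- upper bound on s : μ * s ≤ μ * η + 2 * σ^2 * δ
  have hsb : μ * s ≤ μ * η + 2 * σ ^ 2 * δ := by
    have hg : μ ^ 2 * x < δ * (2 * δ * σ ^ 2 + 2 * η * μ - μ ^ 2) := by
      have h := mul_lt_mul_of_pos_left hxlt (by positivity : (0:ℝ) < μ ^ 2)
      calc μ ^ 2 * x < μ ^ 2 * (δ / μ * (2 * δ * σ ^ 2 / μ + 2 * η - μ)) := h
        _ = δ * (2 * δ * σ ^ 2 + 2 * η * μ - μ ^ 2) := by field_simp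
    have e1 : μ ^ 2 * s ^ 2 = μ ^ 2 * η ^ 2 + 2 * σ ^ 2 * μ ^ 2 * δ + 2 * σ ^ 2 * μ ^ 2 * x := by
      linear_combination μ ^ 2 * hs2
    have h2σ : 2 * σ ^ 2 * (μ ^ 2 * x) < 2 * σ ^ 2 * (δ * (2 * δ * σ ^ 2 + 2 * η * μ - μ ^ 2)) :=
      mul_lt_mul_of_pos_left hg (by positivity)
    have h1 : (μ * s) ^ 2 < (μ * η + 2 * σ ^ 2 * δ) ^ 2 := by nlinarith [e1, h2σ]
    have hsum : 0 < μ * s + (μ * η + 2 * σ ^ 2 * δ) := by positivity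
    nlinarith [h1, hsum]
  -- main certificate
  have hXc : s ^ 2 - η ^ 2 - 2 * σ ^ 2 * x = 2 * σ ^ 2 * δ := by linear_combination hs2
  have hXpos : 0 < 2 * σ ^ 2 * x := by positivity
  have hcpos : 0 < 2 * σ ^ 2 * δ := by positivity
  have F_eq : 2 * (2 * σ ^ 2 * δ) * s * (η + s) * (η + s - μ) - μ * (2 * σ ^ 2 * x) * (s ^ 2 - η ^ 2) =
      (s + η) * ((2 * σ ^ 2 * δ) * ((s - η) ^ 2 + 2 * s * (2 * η - μ)) + (2 * σ ^ 2 * δ) * (2 * σ ^ 2 * δ)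
        + ((2 * σ ^ 2 * δ) - μ * (s - η)) * (2 * σ ^ 2 * x)) := by
    linear_combination ((2 * σ ^ 2 * δ) * (s + η)) * hXc
  have hterm1 : 0 ≤ (2 * σ ^ 2 * δ) * ((s - η) ^ 2 + 2 * s * (2 * η - μ)) := by
    have : 0 ≤ (s - η) ^ 2 + 2 * s * (2 * η - μ) := by nlinarith [sq_nonneg (s - η)]
    positivity
  have hterm3 : 0 ≤ ((2 * σ ^ 2 * δ) - μ * (s - η)) * (2 * σ ^ 2 * x) := by
    apply mul_nonneg _ hXpos.le
    nlinarith [hsb]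
  have hT : 0 ≤ (s + η) * ((2 * σ ^ 2 * δ) * ((s - η) ^ 2 + 2 * s * (2 * η - μ)) + (2 * σ ^ 2 * δ) * (2 * σ ^ 2 * δ)
        + ((2 * σ ^ 2 * δ) - μ * (s - η)) * (2 * σ ^ 2 * x)) :=
    mul_nonneg (by linarith) (add_nonneg (add_nonneg hterm1 (mul_nonneg hcpos.le hcpos.le)) hterm3)
  have he : μ * (2 * σ ^ 2 * x) * (2 * σ ^ 2 * x + 2 * σ ^ 2 * δ) = μ * (2 * σ ^ 2 * x) * (s ^ 2 - η ^ 2) := by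
    linear_combination (μ * (2 * σ ^ 2 * x)) * (hXc.symm)
  have hfin : μ * (2 * σ ^ 2 * x) * (2 * σ ^ 2 * x + 2 * σ ^ 2 * δ) ≤
      2 * (2 * σ ^ 2 * δ) * s * (η + s) * (η + s - μ) := by linarith [F_eq, hT, he]
  have h4 : 0 ≤ 4 * σ ^ 2 * (δ * s * (η + s) * (η + s - μ) - x * (x + δ) * μ * σ ^ 2) := by
    nlinarith [hfin]
  have hσ4 : 0 < 4 * σ ^ 2 := by positivity
  have h5 := (mul_nonneg_iff_of_pos_left hσ4).mp h4
  linarith [h5]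

theorem f2_antitone_and_limits (σ η δ μ : ℝ)
    (hσ : 0 < σ) (hδ : 0 < δ) (hη : 0 < η) (hημ : η < μ) (hμ2 : μ < 2 * η) :
    AntitoneOn (f2 σ η δ μ) (Set.Ioo 0 (δ / μ * (2 * δ * σ ^ 2 / μ + 2 * η - μ))) ∧
    Tendsto (f2 σ η δ μ) (nhdsWithin 0 (Set.Ioi 0)) atTop ∧
    Tendsto (f2 σ η δ μ)
      (nhdsWithin (δ / μ * (2 * δ * σ ^ 2 / μ + 2 * η - μ))
        (Set.Iio (δ / μ * (2 * δ * σ ^ 2 / μ + 2 * η - μ)))) (nhds 1) := by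
  have hμ : 0 < μ := hη.trans hημ
  have hfac : 0 < 2 * δ * σ ^ 2 / μ + 2 * η - μ := by
    have : 0 < 2 * δ * σ ^ 2 / μ := by positivity
    linarith
  have hγ₁pos : 0 < δ / μ * (2 * δ * σ ^ 2 / μ + 2 * η - μ) := mul_pos (div_pos hδ hμ) hfac
  refine ⟨?_, ?_, ?_⟩
  · -- AntitoneOn
    refine antitoneOn_of_deriv_nonpos (convex_Ioo _ _) ?_ ?_ ?_
    · intro y hy
      exact (f2_hasDerivAt σ η δ μ hσ hδ hη hy.1).continuousAt.continuousWithinAt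
    · rw [interior_Ioo]
      intro y hy
      exact (f2_hasDerivAt σ η δ μ hσ hδ hη hy.1).differentiableAt.differentiableWithinAt
    · rw [interior_Ioo]
      intro y hy
      rw [(f2_hasDerivAt σ η δ μ hσ hδ hη hy.1).deriv]
      apply div_nonpos_of_nonpos_of_nonneg
      · exact sub_nonpos.mpr (core_ineq σ η δ μ y hσ hδ hη hημ hμ2 hy.1 hy.2)
      · have hsq : 0 ≤ Real.sqrt (η ^ 2 + 2 * σ ^ 2 * (δ + y)) := Real.sqrt_nonneg _
        positivity
  · -- limit at 0⁺
    have hq0 : 0 < η ^ 2 + 2 * σ ^ 2 * δ := by positivity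
    have hs0 : η < Real.sqrt (η ^ 2 + 2 * σ ^ 2 * δ) := by
      refine (Real.lt_sqrt hη.le).mpr ?_
      have : 0 < 2 * σ ^ 2 * δ := by positivity
      linarith
    have hden0 : (0:ℝ) < η + Real.sqrt (η ^ 2 + 2 * σ ^ 2 * δ) := by linarith
    have hL : 0 < 1 - μ / (η + Real.sqrt (η ^ 2 + 2 * σ ^ 2 * δ)) := by
      rw [sub_pos, div_lt_one hden0]
      linarith
    have hB : Tendsto (fun γ : ℝ => 1 - μ / (η + Real.sqrt (η ^ 2 + 2 * σ ^ 2 * (δ + γ))))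
        (𝓝[>] (0:ℝ)) (𝓝 (1 - μ / (η + Real.sqrt (η ^ 2 + 2 * σ ^ 2 * δ)))) := by
      have hc : ContinuousAt (fun γ : ℝ => 1 - μ / (η + Real.sqrt (η ^ 2 + 2 * σ ^ 2 * (δ + γ)))) 0 := by
        apply ContinuousAt.sub continuousAt_const
        apply ContinuousAt.div continuousAt_const
        · exact continuousAt_const.add (Real.continuous_sqrt.continuousAt.comp (by fun_prop))
        · simpa using hden0.ne'
      have h := tendsto_nhdsWithin_of_tendsto_nhds (s := Set.Ioi (0:ℝ)) hc.tendsto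
      simpa using h
    have hnum : Tendsto (fun γ : ℝ => γ + δ) (𝓝[>] (0:ℝ)) (𝓝 δ) := by
      apply tendsto_nhdsWithin_of_tendsto_nhds
      simpa using (continuous_add_right δ).tendsto (0:ℝ)
    have hA : Tendsto (fun γ : ℝ => (γ + δ) * γ⁻¹) (𝓝[>] (0:ℝ)) atTop :=
      Filter.Tendsto.pos_mul_atTop hδ hnum tendsto_inv_nhdsGT_zero
    have hform : f2 σ η δ μ = fun γ : ℝ =>
        ((γ + δ) * γ⁻¹) * (1 - μ / (η + Real.sqrt (η ^ 2 + 2 * σ ^ 2 * (δ + γ)))) := by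
      funext γ
      rw [f2, div_eq_mul_inv]
    rw [hform]
    exact Filter.Tendsto.atTop_mul_pos hL hA hB
  · -- limit at γ₁⁻
    set γ₁ := δ / μ * (2 * δ * σ ^ 2 / μ + 2 * η - μ) with hγ₁
    have hsq : Real.sqrt (η ^ 2 + 2 * σ ^ 2 * (δ + γ₁)) = η + 2 * σ ^ 2 * δ / μ := by
      rw [show η ^ 2 + 2 * σ ^ 2 * (δ + γ₁) = (η + 2 * σ ^ 2 * δ / μ) ^ 2 by
        rw [hγ₁]; field_simp; ring]
      exact Real.sqrt_sq (by positivity)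
    have hval : f2 σ η δ μ γ₁ = 1 := by
      have h1 : (0:ℝ) < η + (η + 2 * σ ^ 2 * δ / μ) := by positivity
      have hγδ : 0 < γ₁ + δ := by linarith
      have key : 1 - μ / (η + (η + 2 * σ ^ 2 * δ / μ)) = γ₁ / (γ₁ + δ) := by
        have h2 : μ * (γ₁ + δ) / (η + (η + 2 * σ ^ 2 * δ / μ)) = δ := by
          rw [div_eq_iff h1.ne', hγ₁]
          field_simp
          ring
        rw [eq_div_iff hγδ.ne', sub_mul, one_mul, div_mul_eq_mul_div, sub_eq_iff_eq_add]
        linarith [h2]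
      rw [show f2 σ η δ μ γ₁
          = ((γ₁ + δ) / γ₁) * (1 - μ / (η + Real.sqrt (η ^ 2 + 2 * σ ^ 2 * (δ + γ₁)))) from rfl,
        hsq, key, div_mul_div_comm, mul_comm]
      exact div_self (by positivity)
    have hcont : ContinuousAt (f2 σ η δ μ) γ₁ :=
      (f2_hasDerivAt σ η δ μ hσ hδ hη hγ₁pos).continuousAt
    have := hcont.continuousWithinAt (s := Set.Iio γ₁)
    rw [ContinuousWithinAt, hval] at this
    exact this
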